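/- Let L > 0 and let q : [0, L] → ℝ be continuous with q(x₁) > 0 for some x₁ ∈ [0, L]. Then there exist C¹ functions h, v : [0, L] → ℝ, compactly supported in (0, L), such that ∫₀ᴸ q(x) h'(x) v'(x) dx > ∫₀ᴸ (|h(x)|² + |v(x)|² + |h'(x)|²) dx. -/

import Mathlib

set_option maxHeartbeats 2000000

open Set MeasureTheory intervalIntegral Metric

lemma loc_integral (f : ℝ → ℝ) (hf : Continuous f) {a u w b : ℝ}
    (hau : a ≤ u) (huw : u ≤ w) (hwb : w ≤ b)
    (hz : ∀ x, x ∉ Set.Ioo u w → f x = 0) :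
    ∫ x in a..b, f x = ∫ x in u..w, f x := by
  have i : ∀ p r : ℝ, IntervalIntegrable f volume p r := fun p r =>
    hf.intervalIntegrable p r
  have h1 : ∫ x in a..u, f x = 0 := by
    rw [intervalIntegral.integral_congr (g := fun _ => (0:ℝ))
      (fun x hx => by
        rw [Set.uIcc_of_le hau] at hx
        exact hz x (fun hx' => absurd hx'.1 (not_lt.2 hx.2)))]
    simp
  have h3 : ∫ x in w..b, f x = 0 := by
    rw [intervalIntegral.integral_congr (g := fun _ => (0:ℝ))
      (fun x hx => by
        rw [Set.uIcc_of_le hwb] at hx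
        exact hz x (fun hx' => absurd hx'.2 (not_lt.2 hx.1)))]
    simp
  have e1 := intervalIntegral.integral_add_adjacent_intervals (i a u) (i u w)
  have e2 := intervalIntegral.integral_add_adjacent_intervals (i a w) (i w b)
  linarith

theorem stmt_13 (L : ℝ) (hL : 0 < L) (q : ℝ → ℝ)
    (hq : ContinuousOn q (Set.Icc 0 L))
    (x₁ : ℝ) (hx₁ : x₁ ∈ Set.Icc 0 L) (hpos : 0 < q x₁) :
    ∃ h v : ℝ → ℝ, ContDiff ℝ 1 h ∧ ContDiff ℝ 1 v ∧
      tsupport h ⊆ Set.Ioo 0 L ∧ tsupport v ⊆ Set.Ioo 0 L ∧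
      (∫ x in (0 : ℝ)..L, q x * deriv h x * deriv v x)
        > ∫ x in (0 : ℝ)..L, (|h x| ^ 2 + |v x| ^ 2 + |deriv h x| ^ 2) := by
  -- the lower bound c for q near x₁
  set c := q x₁ / 2 with hcdef
  have hc0 : 0 < c := by rw [hcdef]; linarith
  have hev : ∀ᶠ x in nhdsWithin x₁ (Set.Icc 0 L), c < q x :=
    (hq x₁ hx₁).eventually (eventually_gt_nhds (by rw [hcdef]; linarith))
  obtain ⟨δ, hδ0, hδsub⟩ := Metric.mem_nhdsWithin_iff.1 hev
  -- the geometry: center m, scales r and lam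
  set r := min (δ/4) (L/4) with hrdef
  have hr0 : 0 < r := lt_min (by linarith) (by linarith)
  have hrδ : r ≤ δ/4 := min_le_left _ _
  have hrL : r ≤ L/4 := min_le_right _ _
  set m := min (max x₁ r) (L - r) with hmdef
  have hm1 : r ≤ m := le_min (le_max_right _ _) (by linarith)
  have hm2 : m ≤ L - r := min_le_right _ _
  have hmx1 : x₁ - r ≤ m := le_min ((by linarith : x₁ - r ≤ x₁).trans (le_max_left _ _))
    (by linarith [hx₁.2])
  have hmx2 : m ≤ x₁ + r := (min_le_left _ _).trans
    (max_le (by linarith) (by linarith [hx₁.1]))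
  -- the bump function
  obtain ⟨ψ, hIn, hOut⟩ : ∃ ψ : ContDiffBump (0:ℝ), ψ.rIn = 1 ∧ ψ.rOut = 2 :=
    ⟨⟨1, 2, one_pos, one_lt_two⟩, rfl, rfl⟩
  have hψc := ψ.contDiff (n := 2)
  have hψd : Differentiable ℝ ⇑ψ := hψc.differentiable (by norm_num)
  have hψcont : Continuous ⇑ψ := hψc.continuous
  have hdc : Continuous (deriv ⇑ψ) := hψc.continuous_deriv (by norm_num)
  have hψ2 : ψ (2:ℝ) = 0 := ψ.zero_of_le_dist (by simp [Real.dist_eq, hOut])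
  have hψzero : ψ (0:ℝ) = 1 := ψ.one_of_mem_closedBall (by simp [hIn])
  have hψ0 : ∀ y : ℝ, y ∉ Set.Ioo (-3:ℝ) 3 → ψ y = 0 := by
    intro y hy
    apply ψ.zero_of_le_dist
    rw [Real.dist_eq, sub_zero, hOut]
    rcases not_and_or.1 (fun h => hy ⟨h.1, h.2⟩) with h | h
    · push_neg at h; rw [abs_of_nonpos (by linarith)]; linarith
    · push_neg at h; rw [abs_of_nonneg (by linarith)]; linarith
  have hdψ0 : ∀ y : ℝ, y ∉ Set.Ioo (-3:ℝ) 3 → deriv ⇑ψ y = 0 := by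
    intro y hy
    by_contra hcon
    have hmem : y ∈ tsupport ⇑ψ := support_deriv_subset (Function.mem_support.2 hcon)
    rw [ψ.tsupport_eq, hOut, Metric.mem_closedBall, Real.dist_eq, sub_zero] at hmem
    rcases not_and_or.1 (fun h' => hy ⟨h'.1, h'.2⟩) with h' | h' <;> push_neg at h' <;>
      [ (exact absurd hmem (by rw [abs_of_nonpos (by linarith)]; push_neg; linarith));
        (exact absurd hmem (by rw [abs_of_nonneg (by linarith)]; push_neg; linarith)) ]
  -- A and B
  set A := ∫ y in (-3:ℝ)..3, (ψ y)^2 with hAdef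
  set B := ∫ y in (-3:ℝ)..3, (deriv ⇑ψ y)^2 with hBdef
  have hA : 0 ≤ A :=
    intervalIntegral.integral_nonneg (by norm_num) (fun u _ => sq_nonneg _)
  have hB : 0 < B := by
    obtain ⟨t, ht, hslope⟩ := exists_hasDerivAt_eq_slope (f := ⇑ψ) (f' := deriv ⇑ψ)
      (by norm_num : (0:ℝ) < 2) hψcont.continuousOn (fun x _ => (hψd x).hasDerivAt)
    have ht2 : deriv ⇑ψ t = -(1/2) := by rw [hslope, hψ2, hψzero]; norm_num
    have hgt : (0:ℝ) < (deriv ⇑ψ t)^2 := by rw [ht2]; norm_num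
    have hgcont : Continuous (fun y => (deriv ⇑ψ y)^2) := hdc.pow 2
    have hev2 : ∀ᶠ y in nhds t, 0 < (deriv ⇑ψ y)^2 :=
      (hgcont.tendsto t).eventually (eventually_gt_nhds hgt)
    obtain ⟨ε₀, hε₀, hball⟩ := Metric.eventually_nhds_iff.1 hev2
    set s := min (ε₀/2) 1 with hs
    have hs0 : 0 < s := lt_min (by linarith) one_pos
    have hs1 : s ≤ 1 := min_le_right _ _
    have i : ∀ p r : ℝ, IntervalIntegrable (fun y => (deriv ⇑ψ y)^2) volume p r :=
      fun p r => hgcont.intervalIntegrable p r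
    have e1 := intervalIntegral.integral_add_adjacent_intervals (i (-3) (t-s)) (i (t-s) (t+s))
    have e2 := intervalIntegral.integral_add_adjacent_intervals (i (-3) (t+s)) (i (t+s) 3)
    have n1 : 0 ≤ ∫ y in (-3:ℝ)..(t-s), (deriv ⇑ψ y)^2 :=
      intervalIntegral.integral_nonneg (by linarith [ht.1, ht.2]) (fun u _ => sq_nonneg _)
    have n3 : 0 ≤ ∫ y in (t+s)..(3:ℝ), (deriv ⇑ψ y)^2 :=
      intervalIntegral.integral_nonneg (by linarith [ht.1, ht.2]) (fun u _ => sq_nonneg _)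
    have nmid : 0 < ∫ y in (t-s)..(t+s), (deriv ⇑ψ y)^2 := by
      apply intervalIntegral_pos_of_pos_on (i _ _) _ (by linarith)
      intro x hx
      apply hball
      rw [Real.dist_eq, abs_sub_lt_iff]
      have h1 := hx.1; have h2 := hx.2
      constructor <;> simp only [hs] at * <;>
        [ (have := min_le_left (ε₀/2) 1; linarith);
          (have := min_le_left (ε₀/2) 1; linarith) ]
    rw [hBdef]; linarith
  -- the scale lam
  have hquot : 0 < c^2*B/((c^2+4)*A+1) :=
    div_pos (mul_pos (pow_pos hc0 2) hB) (by nlinarith [hA, sq_nonneg c])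
  set lam := min (r/4) (Real.sqrt (c^2*B/((c^2+4)*A+1))) with hlamdef
  have hlam0 : 0 < lam := lt_min (by linarith) (Real.sqrt_pos.2 hquot)
  have hlamr : lam ≤ r/4 := min_le_left _ _
  have hlam2 : (c^2+4)*A*lam^2 < c^2*B := by
    have h1 : lam ≤ Real.sqrt (c^2*B/((c^2+4)*A+1)) := min_le_right _ _
    have h2 : lam^2 ≤ c^2*B/((c^2+4)*A+1) := by
      have hss := Real.sq_sqrt hquot.le
      have hpl := pow_le_pow_left₀ hlam0.le h1 2
      rwa [hss] at hpl
    have h3 : (0:ℝ) < (c^2+4)*A+1 := by nlinarith [hA, sq_nonneg c]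
    rw [le_div_iff₀ h3] at h2
    have := pow_pos hlam0 2
    nlinarith [this, h2]
  -- epsilon
  set ε := Real.sqrt (c/2) with hεdef
  have hε0 : 0 < ε := Real.sqrt_pos.2 (half_pos hc0)
  have hε2 : ε^2 = c/2 := Real.sq_sqrt (half_pos hc0).le
  have hεinv : ε⁻¹^2 = 2/c := by rw [inv_pow, hε2, inv_div]
  have hm3 : 3 * lam ≤ m := by linarith
  have hm4 : 3 * lam ≤ L - m := by linarith
  clear_value c r m lam ε
  -- the functions
  set hh : ℝ → ℝ := fun x => ε * ψ (x/lam - m/lam) with hhdef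
  set vv : ℝ → ℝ := fun x => ε⁻¹ * ψ (x/lam - m/lam) with hvdef
  have ucont : Continuous (fun y : ℝ => y/lam - m/lam) :=
    (continuous_id.div_const _).sub continuous_const
  have hin : ∀ x : ℝ, HasDerivAt (fun y : ℝ => y / lam - m / lam) (1/lam) x := fun x =>
    ((hasDerivAt_id x).div_const lam).sub_const _
  have hφd : ∀ x : ℝ, HasDerivAt (fun y : ℝ => ψ (y/lam - m/lam))
      (deriv ⇑ψ (x/lam - m/lam) * (1/lam)) x := fun x =>
    (hψd _).hasDerivAt.comp x (hin x)
  have hd : ∀ x : ℝ, deriv hh x = ε * (deriv ⇑ψ (x/lam - m/lam) * (1/lam)) := fun x =>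
    ((hφd x).const_mul ε).deriv
  have hdv : ∀ x : ℝ, deriv vv x = ε⁻¹ * (deriv ⇑ψ (x/lam - m/lam) * (1/lam)) := fun x =>
    ((hφd x).const_mul ε⁻¹).deriv
  have hucd : ContDiff ℝ 1 (fun y : ℝ => y / lam - m / lam) :=
    (contDiff_id.div_const lam).sub contDiff_const
  have hψcd1 : ContDiff ℝ 1 ⇑ψ := ψ.contDiff
  have hhc : ContDiff ℝ 1 hh := contDiff_const.mul (hψcd1.comp hucd)
  have hvc : ContDiff ℝ 1 vv := contDiff_const.mul (hψcd1.comp hucd)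
  -- support
  have hsupIcc : ∀ (a : ℝ), tsupport (fun x => a * ψ (x/lam - m/lam)) ⊆ Set.Ioo 0 L := by
    intro a
    have hsub : Function.support (fun x => a * ψ (x/lam - m/lam))
        ⊆ Set.Icc (m - 2*lam) (m + 2*lam) := by
      intro x hx
      have hne : ψ (x/lam - m/lam) ≠ 0 := right_ne_zero_of_mul hx
      have : x/lam - m/lam ∈ Function.support ⇑ψ := Function.mem_support.2 hne
      rw [ψ.support_eq, hOut, Metric.mem_ball, Real.dist_eq, sub_zero] at this
      rw [div_sub_div_same, abs_div, abs_of_pos hlam0, div_lt_iff₀ hlam0] at this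
      have h1 := abs_lt.1 this
      constructor <;> [linarith [h1.1]; linarith [h1.2]]
    refine (closure_minimal hsub isClosed_Icc).trans (Set.Icc_subset_Ioo ?_ ?_) <;> linarith
  -- key change of variables
  have key : ∀ F : ℝ → ℝ, Continuous F → (∀ y, y ∉ Set.Ioo (-3:ℝ) 3 → F y = 0) →
      (∫ x in (0:ℝ)..L, F (x / lam - m / lam)) = lam * ∫ y in (-3:ℝ)..3, F y := by
    intro F hF hFz
    rw [intervalIntegral.integral_comp_div_sub F hlam0.ne' (m/lam), smul_eq_mul]
    congr 1
    have hb1 : (3:ℝ) ≤ m / lam := (le_div_iff₀ hlam0).2 (by linarith)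
    have hb2 : (3:ℝ) ≤ (L - m) / lam := (le_div_iff₀ hlam0).2 (by linarith)
    apply loc_integral F hF _ (by norm_num) _ hFz
    · rw [zero_div, zero_sub]; linarith
    · rw [div_sub_div_same] at *; linarith
  have IA : (∫ x in (0:ℝ)..L, (ψ (x/lam - m/lam))^2) = lam * A :=
    key (fun y => (ψ y)^2) (hψcont.pow 2) (fun y hy => by show (ψ y)^2 = 0; rw [hψ0 y hy]; norm_num)
  have IB : (∫ x in (0:ℝ)..L, (deriv ⇑ψ (x/lam - m/lam))^2) = lam * B :=
    key (fun y => (deriv ⇑ψ y)^2) (hdc.pow 2) (fun y hy => by show (deriv ⇑ψ y)^2 = 0; rw [hdψ0 y hy]; norm_num)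
  clear_value A B
  -- the two main integral identities / bounds
  have hDcont : Continuous (fun x : ℝ => (deriv ⇑ψ (x/lam - m/lam))^2) :=
    (hdc.comp ucont).pow 2
  have lhs_eq : (∫ x in (0:ℝ)..L, q x * deriv hh x * deriv vv x)
      = ∫ x in (0:ℝ)..L, q x * ((1/lam)^2 * (deriv ⇑ψ (x/lam - m/lam))^2) := by
    apply intervalIntegral.integral_congr
    intro x _
    show q x * deriv hh x * deriv vv x = _
    rw [hd x, hdv x]
    field_simp
  have int_g : IntervalIntegrable
      (fun x => q x * ((1/lam)^2 * (deriv ⇑ψ (x/lam - m/lam))^2)) volume 0 L := by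
    apply ContinuousOn.intervalIntegrable
    apply ContinuousOn.mul
    · apply hq.mono; rw [Set.uIcc_of_le hL.le]
    · exact (continuous_const.mul hDcont).continuousOn
  have int_f : IntervalIntegrable
      (fun x => (c * (1/lam)^2) * (deriv ⇑ψ (x/lam - m/lam))^2) volume 0 L :=
    (continuous_const.mul hDcont).intervalIntegrable _ _
  have lhs_ge : (∫ x in (0:ℝ)..L, q x * ((1/lam)^2 * (deriv ⇑ψ (x/lam - m/lam))^2))
      ≥ ∫ x in (0:ℝ)..L, (c * (1/lam)^2) * (deriv ⇑ψ (x/lam - m/lam))^2 := by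
    apply intervalIntegral.integral_mono_on hL.le int_f int_g
    intro x hx
    show (c * (1/lam)^2) * (deriv ⇑ψ (x/lam - m/lam))^2
      ≤ q x * ((1/lam)^2 * (deriv ⇑ψ (x/lam - m/lam))^2)
    by_cases hDx : deriv ⇑ψ (x/lam - m/lam) = 0
    · rw [hDx]; simp
    · have hmem : x/lam - m/lam ∈ tsupport ⇑ψ :=
        support_deriv_subset (Function.mem_support.2 hDx)
      rw [ψ.tsupport_eq, hOut, Metric.mem_closedBall, Real.dist_eq, sub_zero] at hmem
      rw [div_sub_div_same, abs_div, abs_of_pos hlam0, div_le_iff₀ hlam0] at hmem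
      have h1 := abs_le.1 hmem
      have hxx : |x - x₁| < δ := by
        rw [abs_sub_lt_iff]
        constructor <;> [linarith [h1.2]; linarith [h1.1]]
      have hqx : c < q x := hδsub ⟨Metric.mem_ball.2 (by rw [Real.dist_eq]; exact hxx), hx⟩
      have hk : (0:ℝ) ≤ (1/lam)^2 * (deriv ⇑ψ (x/lam - m/lam))^2 := by positivity
      calc (c * (1/lam)^2) * (deriv ⇑ψ (x/lam - m/lam))^2
          = c * ((1/lam)^2 * (deriv ⇑ψ (x/lam - m/lam))^2) := by ring
        _ ≤ q x * ((1/lam)^2 * (deriv ⇑ψ (x/lam - m/lam))^2) :=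
            mul_le_mul_of_nonneg_right hqx.le hk
  have lhs_val : (∫ x in (0:ℝ)..L, (c * (1/lam)^2) * (deriv ⇑ψ (x/lam - m/lam))^2)
      = (c * (1/lam)^2) * (lam * B) := by
    rw [intervalIntegral.integral_const_mul, IB]
  -- right hand side
  have rhs_eq : (∫ x in (0:ℝ)..L, (|hh x|^2 + |vv x|^2 + |deriv hh x|^2))
      = ∫ x in (0:ℝ)..L, ((ε^2 * (ψ (x/lam - m/lam))^2 + ε⁻¹^2 * (ψ (x/lam - m/lam))^2)
          + ε^2 * ((1/lam)^2 * (deriv ⇑ψ (x/lam - m/lam))^2)) := by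
    apply intervalIntegral.integral_congr
    intro x _
    show |hh x| ^ 2 + |vv x| ^ 2 + |deriv hh x| ^ 2 = _
    rw [hd x]
    simp only [hhdef, hvdef, sq_abs]
    ring
  have hFcont : Continuous (fun x : ℝ => (ψ (x/lam - m/lam))^2) :=
    (hψcont.comp ucont).pow 2
  have i1 : IntervalIntegrable (fun x => ε^2 * (ψ (x/lam - m/lam))^2) volume 0 L :=
    (continuous_const.mul hFcont).intervalIntegrable _ _
  have i2 : IntervalIntegrable (fun x => ε⁻¹^2 * (ψ (x/lam - m/lam))^2) volume 0 L :=
    (continuous_const.mul hFcont).intervalIntegrable _ _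
  have i3 : IntervalIntegrable
      (fun x => ε^2 * ((1/lam)^2 * (deriv ⇑ψ (x/lam - m/lam))^2)) volume 0 L :=
    (continuous_const.mul (continuous_const.mul hDcont)).intervalIntegrable _ _
  have rhs_val : (∫ x in (0:ℝ)..L, ((ε^2 * (ψ (x/lam - m/lam))^2
        + ε⁻¹^2 * (ψ (x/lam - m/lam))^2)
        + ε^2 * ((1/lam)^2 * (deriv ⇑ψ (x/lam - m/lam))^2)))
      = ε^2 * (lam * A) + ε⁻¹^2 * (lam * A) + ε^2 * ((1/lam)^2 * (lam * B)) := by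
    rw [intervalIntegral.integral_add (i1.add i2) i3, intervalIntegral.integral_add i1 i2]
    rw [intervalIntegral.integral_const_mul, intervalIntegral.integral_const_mul,
      intervalIntegral.integral_const_mul, IA]
    congr 1
    rw [intervalIntegral.integral_const_mul, IB]
  -- final numeric inequality
  have final : ε^2 * (lam * A) + ε⁻¹^2 * (lam * A) + ε^2 * ((1/lam)^2 * (lam * B))
      < (c * (1/lam)^2) * (lam * B) := by
    rw [hε2, hεinv]
    have hX : (1/lam)^2*(lam*B) = B/lam := by
      field_simp
    rw [hX]
    have hpos2 : (0:ℝ) < 2*c*lam := by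
      have := mul_pos (mul_pos two_pos hc0) hlam0
      linarith
    rw [← mul_lt_mul_iff_of_pos_right hpos2]
    have hmul : (c/2*(lam*A) + 2/c*(lam*A) + c/2*(B/lam)) * (2*c*lam)
        = c^2*A*lam^2 + 4*(A*lam^2) + c^2*B := by
      field_simp
      ring
    have hmul2 : (c * (1/lam)^2 * (lam*B)) * (2*c*lam) = 2*(c^2*B) := by
      field_simp
    rw [hmul, hmul2]
    linarith [hlam2]
  refine ⟨hh, vv, hhc, hvc, hsupIcc ε, hsupIcc ε⁻¹, ?_⟩
  rw [lhs_eq, rhs_eq, rhs_val]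
  calc ε^2 * (lam * A) + ε⁻¹^2 * (lam * A) + ε^2 * ((1/lam)^2 * (lam * B))
      < (c * (1/lam)^2) * (lam * B) := final
    _ = ∫ x in (0:ℝ)..L, (c * (1/lam)^2) * (deriv ⇑ψ (x/lam - m/lam))^2 := lhs_val.symm
    _ ≤ _ := lhs_ge
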